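/- Let v : Fin N → ℝ be a family of voter ideal points on the real line and let I be a subset of Fin N. Then I is SOI-allowed if and only if there exists a point t ∈ ℝ such that either (v i < t for all i ∈ I and v j > t for all j ∉ I) or (v i > t for all i ∈ I and v j < t for all j ∉ I); in particular, the one-dimensional SOI-allowed coalitions are exactly the one-dimensional EDP-allowed coalitions. -/
import Mathlib


/-- A coalition `I` is **SOI-allowed** (one dimension): there exist outcome locations
`p, q ∈ ℝ` and strengths (radii) `r, s ≥ 0` such that every voter ideal point lies in
exactly one of the two closed intervals `[p - r, p + r]` and `[q - s, q + s]`, and `I`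
is exactly the set of voters in the first interval. -/
def SOIAllowed1D {N : ℕ} (v : Fin N → ℝ) (I : Set (Fin N)) : Prop :=
  ∃ p q r s : ℝ, 0 ≤ r ∧ 0 ≤ s ∧
    (∀ i, Xor' (|v i - p| ≤ r) (|v i - q| ≤ s)) ∧
    I = {i | |v i - p| ≤ r}

/-- A coalition `I` is **EDP-allowed** (one dimension): there exist outcome points
`p, q ∈ ℝ` such that every voter in `I` is strictly closer to `p` and every voter
outside `I` is strictly closer to `q`. -/
def EDPAllowed1D {N : ℕ} (v : Fin N → ℝ) (I : Set (Fin N)) : Prop :=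
  ∃ p q : ℝ, (∀ i ∈ I, |v i - p| < |v i - q|) ∧ (∀ j ∉ I, |v j - q| < |v j - p|)

lemma closer_iff {p q x : ℝ} (h : p < q) : |x - p| < |x - q| ↔ x < (p + q) / 2 := by
  rcases abs_cases (x - p) with ⟨h1, h1'⟩ | ⟨h1, h1'⟩ <;>
    rcases abs_cases (x - q) with ⟨h2, h2'⟩ | ⟨h2, h2'⟩ <;>
    rw [h1, h2] <;> constructor <;> intro hx <;> linarith

lemma farther_iff {p q x : ℝ} (h : p < q) : |x - q| < |x - p| ↔ (p + q) / 2 < x := by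
  rcases abs_cases (x - p) with ⟨h1, h1'⟩ | ⟨h1, h1'⟩ <;>
    rcases abs_cases (x - q) with ⟨h2, h2'⟩ | ⟨h2, h2'⟩ <;>
    rw [h1, h2] <;> constructor <;> intro hx <;> linarith

lemma mem_int_iff {a b : ℝ} (x : ℝ) : |x - (a + b) / 2| ≤ (b - a) / 2 ↔ a ≤ x ∧ x ≤ b := by
  rw [abs_le]; constructor <;> rintro ⟨u1, u2⟩ <;> constructor <;> linarith

lemma soi_to_sep {N : ℕ} (v : Fin N → ℝ) (I : Set (Fin N)) (h : SOIAllowed1D v I) :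
    ∃ t : ℝ, ((∀ i ∈ I, v i < t) ∧ (∀ j ∉ I, v j > t)) ∨
      ((∀ i ∈ I, v i > t) ∧ (∀ j ∉ I, v j < t)) := by
  obtain ⟨p, q, r, s, hr, hs, hxor, hI⟩ := h
  have hIin : ∀ i ∈ I, p - r ≤ v i ∧ v i ≤ p + r ∧ (v i < q - s ∨ q + s < v i) := by
    intro i hi
    have hA : |v i - p| ≤ r := by rw [hI] at hi; exact hi
    have hB : ¬ (|v i - q| ≤ s) := by
      rcases hxor i with ⟨_, hb⟩ | ⟨_, ha⟩
      · exact hb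
      · exact absurd hA ha
    have h1 := abs_le.mp hA
    have h2 := lt_abs.mp (not_le.mp hB)
    refine ⟨by linarith [h1.1], by linarith [h1.2], ?_⟩
    rcases h2 with h2 | h2
    · right; linarith
    · left; linarith
  have hJin : ∀ j ∉ I, q - s ≤ v j ∧ v j ≤ q + s ∧ (v j < p - r ∨ p + r < v j) := by
    intro j hj
    have hA : ¬ (|v j - p| ≤ r) := by rw [hI] at hj; exact hj
    have hB : |v j - q| ≤ s := by
      rcases hxor j with ⟨ha, _⟩ | ⟨hb, _⟩
      · exact absurd ha hA
      · exact hb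
    have h1 := abs_le.mp hB
    have h2 := lt_abs.mp (not_le.mp hA)
    refine ⟨by linarith [h1.1], by linarith [h1.2], ?_⟩
    rcases h2 with h2 | h2
    · right; linarith
    · left; linarith
  by_cases h1 : p + r < q - s
  · refine ⟨(p + r + (q - s)) / 2, Or.inl ⟨fun i hi => ?_, fun j hj => ?_⟩⟩
    · obtain ⟨_, hb, _⟩ := hIin i hi; linarith
    · obtain ⟨ha, _, _⟩ := hJin j hj; linarith
  by_cases h2 : q + s < p - r
  · refine ⟨(q + s + (p - r)) / 2, Or.inr ⟨fun i hi => ?_, fun j hj => ?_⟩⟩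
    · obtain ⟨ha, _, _⟩ := hIin i hi; linarith
    · obtain ⟨_, hb, _⟩ := hJin j hj; linarith
  push_neg at h1 h2
  by_cases h3 : q - s ≤ p - r ∧ p + r ≤ q + s
  · -- A ⊆ B : I is empty
    refine ⟨q + s + 1, Or.inr ⟨fun i hi => ?_, fun j hj => ?_⟩⟩
    · obtain ⟨ha, hb, hc | hc⟩ := hIin i hi <;> exfalso <;> linarith [h3.1, h3.2]
    · obtain ⟨_, hb, _⟩ := hJin j hj; linarith
  by_cases h4 : p - r ≤ q - s ∧ q + s ≤ p + r
  · -- B ⊆ A : complement is empty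
    refine ⟨p + r + 1, Or.inl ⟨fun i hi => ?_, fun j hj => ?_⟩⟩
    · obtain ⟨_, hb, _⟩ := hIin i hi; linarith
    · obtain ⟨ha, hb, hc | hc⟩ := hJin j hj <;> exfalso <;> linarith [h4.1, h4.2]
  push_neg at h3 h4
  rcases le_or_gt (q - s) (p - r) with h5 | h5
  · -- B strictly left-overlapping A
    have h6 : q + s < p + r := h3 h5
    refine ⟨p - r, Or.inr ⟨fun i hi => ?_, fun j hj => ?_⟩⟩
    · obtain ⟨ha, hb, hc | hc⟩ := hIin i hi
      · exfalso; linarith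
      · linarith
    · obtain ⟨ha, hb, hc | hc⟩ := hJin j hj
      · exact hc
      · exfalso; linarith
  · -- A strictly left-overlapping B
    have h6 : p + r < q + s := h4 (le_of_lt h5)
    refine ⟨p + r, Or.inl ⟨fun i hi => ?_, fun j hj => ?_⟩⟩
    · obtain ⟨ha, hb, hc | hc⟩ := hIin i hi
      · linarith
      · exfalso; linarith
    · obtain ⟨ha, hb, hc | hc⟩ := hJin j hj
      · exfalso; linarith
      · exact hc

lemma sep_to_edp {N : ℕ} (v : Fin N → ℝ) (I : Set (Fin N))
    (h : ∃ t : ℝ, ((∀ i ∈ I, v i < t) ∧ (∀ j ∉ I, v j > t)) ∨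
      ((∀ i ∈ I, v i > t) ∧ (∀ j ∉ I, v j < t))) : EDPAllowed1D v I := by
  obtain ⟨t, h | h⟩ := h
  · refine ⟨t - 1, t + 1, fun i hi => ?_, fun j hj => ?_⟩
    · rw [closer_iff (by linarith : t - 1 < t + 1)]
      have := h.1 i hi; linarith
    · rw [farther_iff (by linarith : t - 1 < t + 1)]
      have := h.2 j hj; linarith
  · refine ⟨t + 1, t - 1, fun i hi => ?_, fun j hj => ?_⟩
    · rw [farther_iff (by linarith : t - 1 < t + 1)]
      have := h.1 i hi; linarith
    · rw [closer_iff (by linarith : t - 1 < t + 1)]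
      have := h.2 j hj; linarith

lemma edp_to_soi {N : ℕ} (v : Fin N → ℝ) (I : Set (Fin N)) (h : EDPAllowed1D v I) :
    SOIAllowed1D v I := by
  obtain ⟨p, q, hIcl, hJcl⟩ := h
  by_cases hpq : p = q
  · have hempty : ∀ i : Fin N, False := by
      intro i
      by_cases hi : i ∈ I
      · have := hIcl i hi; rw [hpq] at this; exact lt_irrefl _ this
      · have := hJcl i hi; rw [hpq] at this; exact lt_irrefl _ this
    refine ⟨0, 1, 0, 0, le_refl 0, le_refl 0, fun i => (hempty i).elim, ?_⟩
    ext i; exact (hempty i).elim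
  obtain ⟨M0, hM0⟩ : ∃ M0, ∀ i, |v i| ≤ M0 := Finite.exists_le _
  rcases lt_or_gt_of_ne hpq with hlt | hlt
  · -- p < q : I voters below m := (p+q)/2, others above
    set m := (p + q) / 2 with hm
    set M := |M0| + |m| with hMdef
    have hMv : ∀ i, |v i| ≤ M := fun i =>
      le_trans (hM0 i) (by have := abs_nonneg m; have := le_abs_self M0; linarith)
    have hvlo : ∀ i, -M ≤ v i := fun i => by
      have := abs_le.mp (hMv i); linarith [this.1]
    have hvhi : ∀ i, v i ≤ M := fun i => (abs_le.mp (hMv i)).2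
    have hmM : -M ≤ m := by
      have h1 := neg_abs_le m; have h2 := abs_nonneg M0; linarith
    have hmM' : m ≤ M := by
      have h1 := le_abs_self m; have h2 := abs_nonneg M0; linarith
    have hImem : ∀ i ∈ I, v i < m := fun i hi => (closer_iff hlt).mp (hIcl i hi)
    have hJmem : ∀ j ∉ I, m < v j := fun j hj => (farther_iff hlt).mp (hJcl j hj)
    refine ⟨(-M + m) / 2, (m + M) / 2, (m - -M) / 2, (M - m) / 2,
      by linarith, by linarith, fun i => ?_, ?_⟩
    · by_cases hi : i ∈ I
      · left
        refine ⟨(mem_int_iff (a := -M) (b := m) _).mpr ⟨hvlo i, le_of_lt (hImem i hi)⟩, ?_⟩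
        intro hB
        have := ((mem_int_iff (a := m) (b := M) _).mp hB).1
        linarith [hImem i hi]
      · right
        refine ⟨(mem_int_iff (a := m) (b := M) _).mpr ⟨le_of_lt (hJmem i hi), hvhi i⟩, ?_⟩
        intro hA
        have := ((mem_int_iff (a := -M) (b := m) _).mp hA).2
        linarith [hJmem i hi]
    · ext i
      simp only [Set.mem_setOf_eq]
      constructor
      · intro hi
        exact (mem_int_iff (a := -M) (b := m) _).mpr ⟨hvlo i, le_of_lt (hImem i hi)⟩
      · intro hA
        by_contra hi
        have := ((mem_int_iff (a := -M) (b := m) _).mp hA).2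
        linarith [hJmem i hi]
  · -- q < p : I voters above m := (q+p)/2, others below
    set m := (q + p) / 2 with hm
    set M := |M0| + |m| with hMdef
    have hMv : ∀ i, |v i| ≤ M := fun i =>
      le_trans (hM0 i) (by have := abs_nonneg m; have := le_abs_self M0; linarith)
    have hvlo : ∀ i, -M ≤ v i := fun i => by
      have := abs_le.mp (hMv i); linarith [this.1]
    have hvhi : ∀ i, v i ≤ M := fun i => (abs_le.mp (hMv i)).2
    have hmM : -M ≤ m := by
      have h1 := neg_abs_le m; have h2 := abs_nonneg M0; linarith
    have hmM' : m ≤ M := by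
      have h1 := le_abs_self m; have h2 := abs_nonneg M0; linarith
    have hImem : ∀ i ∈ I, m < v i := fun i hi => (farther_iff hlt).mp (hIcl i hi)
    have hJmem : ∀ j ∉ I, v j < m := fun j hj => (closer_iff hlt).mp (hJcl j hj)
    refine ⟨(m + M) / 2, (-M + m) / 2, (M - m) / 2, (m - -M) / 2,
      by linarith, by linarith, fun i => ?_, ?_⟩
    · by_cases hi : i ∈ I
      · left
        refine ⟨(mem_int_iff (a := m) (b := M) _).mpr ⟨le_of_lt (hImem i hi), hvhi i⟩, ?_⟩
        intro hB
        have := ((mem_int_iff (a := -M) (b := m) _).mp hB).2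
        linarith [hImem i hi]
      · right
        refine ⟨(mem_int_iff (a := -M) (b := m) _).mpr ⟨hvlo i, le_of_lt (hJmem i hi)⟩, ?_⟩
        intro hA
        have := ((mem_int_iff (a := m) (b := M) _).mp hA).1
        linarith [hJmem i hi]
    · ext i
      simp only [Set.mem_setOf_eq]
      constructor
      · intro hi
        exact (mem_int_iff (a := m) (b := M) _).mpr ⟨le_of_lt (hImem i hi), hvhi i⟩
      · intro hA
        by_contra hi
        have := ((mem_int_iff (a := m) (b := M) _).mp hA).1
        linarith [hJmem i hi]

theorem soi_allowed_iff_separated (N : ℕ) (v : Fin N → ℝ) (I : Set (Fin N)) :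
    (SOIAllowed1D v I ↔
      ∃ t : ℝ, ((∀ i ∈ I, v i < t) ∧ (∀ j ∉ I, v j > t)) ∨
        ((∀ i ∈ I, v i > t) ∧ (∀ j ∉ I, v j < t))) ∧
    (SOIAllowed1D v I ↔ EDPAllowed1D v I) := by
  constructor
  · exact ⟨soi_to_sep v I, fun h => edp_to_soi v I (sep_to_edp v I h)⟩
  · exact ⟨fun h => sep_to_edp v I (soi_to_sep v I h), edp_to_soi v I⟩
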